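/- Let a = {a_n} be a positive non-increasing summable sequence and let C_a be the associated decreasing Cantor set, constructed by iteratively removing from [0,1] open gaps: at step k, from each of the 2^k closed intervals I_{k,1},...,I_{k,2^k} one removes an open interval of length a_{2^k+j-1} from I_{k,j}. Then every closed interval I_{n,j} of step n satisfies s_{n+1} < |I_{n,j}| < s_{n-1}, where s_n = 2^{-n} ∑_{i=2^n}^∞ a_i. -/

import Mathlib

open Filter Set Topology

/-- Number of closed balls of radius `δ` needed to cover `F`. -/
noncomputable def coverNum (F : Set ℝ) (δ : ℝ) : ℕ :=
  sInf {n : ℕ | ∃ S : Finset ℝ, S.card = n ∧ F ⊆ ⋃ x ∈ S, Metric.closedBall x δ}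

/-- Upper box-counting dimension. -/
noncomputable def upperBoxDim (F : Set ℝ) : ℝ :=
  limsup (fun δ : ℝ => Real.log (coverNum F δ) / -Real.log δ) (nhdsWithin 0 (Set.Ioi 0))

/-- Lower box-counting dimension. -/
noncomputable def lowerBoxDim (F : Set ℝ) : ℝ :=
  liminf (fun δ : ℝ => Real.log (coverNum F δ) / -Real.log δ) (nhdsWithin 0 (Set.Ioi 0))

/-- Assouad dimension. -/
noncomputable def assouadDim (E : Set ℝ) : ℝ :=
  sInf {α : ℝ | ∃ c > (0:ℝ), ∃ ρ > (0:ℝ), ∀ x ∈ E, ∀ r R : ℝ, 0 < r → r < R → R < ρ →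
    (coverNum (Metric.ball x R ∩ E) r : ℝ) ≤ c * (R / r) ^ α}

/-- Lower (Assouad) dimension. -/
noncomputable def lowerAssouadDim (E : Set ℝ) : ℝ :=
  sSup {α : ℝ | ∃ c > (0:ℝ), ∃ ρ > (0:ℝ), ∀ x ∈ E, ∀ r R : ℝ, 0 < r → r < R → R < ρ →
    c * (R / r) ^ α ≤ (coverNum (Metric.ball x R ∩ E) r : ℝ)}

/-- Upper θ-intermediate dimension (with the convention that at θ = 0 it is the
Hausdorff dimension). -/
noncomputable def upperIntDim (θ : ℝ) (F : Set ℝ) : ℝ :=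
  if θ = 0 then (dimH F).toReal else
  sInf {s : ℝ | 0 ≤ s ∧ ∀ ε > (0:ℝ), ∃ δ₀ > (0:ℝ), ∀ δ : ℝ, 0 < δ → δ ≤ δ₀ →
    ∃ (I : Finset ℕ) (U : ℕ → Set ℝ), (F ⊆ ⋃ i ∈ I, U i) ∧
      (∀ i ∈ I, δ ^ (1 / θ) ≤ Metric.diam (U i) ∧ Metric.diam (U i) ≤ δ) ∧
      ∑ i ∈ I, Metric.diam (U i) ^ s ≤ ε}

/-- Lower θ-intermediate dimension (with the convention that at θ = 0 it is the
Hausdorff dimension). -/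
noncomputable def lowerIntDim (θ : ℝ) (F : Set ℝ) : ℝ :=
  if θ = 0 then (dimH F).toReal else
  sInf {s : ℝ | 0 ≤ s ∧ ∀ ε > (0:ℝ), ∀ δ₀ > (0:ℝ), ∃ δ : ℝ, 0 < δ ∧ δ ≤ δ₀ ∧
    ∃ (I : Finset ℕ) (U : ℕ → Set ℝ), (F ⊆ ⋃ i ∈ I, U i) ∧
      (∀ i ∈ I, δ ^ (1 / θ) ≤ Metric.diam (U i) ∧ Metric.diam (U i) ≤ δ) ∧
      ∑ i ∈ I, Metric.diam (U i) ^ s ≤ ε}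

/-- tails `x_n = ∑_{i=n}^∞ a_i` (the sequence `a` is indexed from 1;
the value `a 0` is irrelevant). -/
noncomputable def xseq (a : ℕ → ℝ) (n : ℕ) : ℝ := ∑' i : ℕ, a (n + i)

/-- `s_n = 2^{-n} x_{2^n}`. -/
noncomputable def sseq (a : ℕ → ℝ) (n : ℕ) : ℝ := xseq a (2 ^ n) / 2 ^ n

/-- `r_n = 2^{-n} ∑_{i=2^n}^{2^{n+1}-1} a_i`. -/
noncomputable def rseq (a : ℕ → ℝ) (n : ℕ) : ℝ :=
  (∑ i ∈ Finset.range (2 ^ n), a (2 ^ n + i)) / 2 ^ n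

/-- The countable complementary set `D_a = {x_k : k ≥ 1} ∪ {0}`. -/
noncomputable def Da (a : ℕ → ℝ) : Set ℝ := {0} ∪ {y : ℝ | ∃ k ≥ 1, y = xseq a k}

/-- Length of the interval corresponding to node `m` (in binary-tree indexing, root `1`)
in the construction of the decreasing Cantor set: the sum of the gaps in the subtree of `m`. -/
noncomputable def clen (a : ℕ → ℝ) (m : ℕ) : ℝ :=
  ∑' k : ℕ, ∑ i ∈ Finset.range (2 ^ k), a (2 ^ k * m + i)

/-- Left endpoint of the interval corresponding to node `m`. -/
noncomputable def lft (a : ℕ → ℝ) : ℕ → ℝ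
  | 0 => 0
  | 1 => 0
  | n + 2 =>
    if (n + 2) % 2 = 0 then lft a ((n + 2) / 2)
    else lft a ((n + 2) / 2) + clen a (n + 1) + a ((n + 2) / 2)
termination_by n => n
decreasing_by all_goals omega

/-- The closed interval corresponding to node `m`:  node `2^n + j - 1` is the
interval `I_{n,j}` of step `n`, for `1 ≤ j ≤ 2^n`. -/
noncomputable def node (a : ℕ → ℝ) (m : ℕ) : Set ℝ := Set.Icc (lft a m) (lft a m + clen a m)

/-- The decreasing Cantor set `C_a` associated with the sequence `a`. -/
noncomputable def cantorSetOf (a : ℕ → ℝ) : Set ℝ :=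
  ⋂ n : ℕ, ⋃ j ∈ Finset.Icc 1 (2 ^ n), node a (2 ^ n + j - 1)

/-- `E` is a complementary set of the sequence `a`: a closed subset of `[0,1]`
whose complement in `[0,1]` is a disjoint union of open intervals of lengths `a_1, a_2, …`. -/
def IsComplSet (a : ℕ → ℝ) (E : Set ℝ) : Prop :=
  ∃ g : ℕ → ℝ,
    (∀ n ≥ 1, Set.Ioo (g n) (g n + a n) ⊆ Set.Icc 0 1) ∧
    (∀ m ≥ 1, ∀ n ≥ 1, m ≠ n →
      Disjoint (Set.Ioo (g m) (g m + a m)) (Set.Ioo (g n) (g n + a n))) ∧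
    E = Set.Icc 0 1 \ ⋃ n ∈ {k : ℕ | 1 ≤ k}, Set.Ioo (g n) (g n + a n)

/-- `γ_{θ,a}(r) = max{ m : s_m ≥ s_r^{1/θ} }`. -/
noncomputable def gammaIdx (a : ℕ → ℝ) (θ : ℝ) (r : ℕ) : ℕ :=
  sSup {m : ℕ | sseq a r ^ (1 / θ) ≤ sseq a m}

section Aux

private lemma amono (a : ℕ → ℝ) (hmono : ∀ n ≥ 1, a (n + 1) ≤ a n) :
    ∀ i j : ℕ, 1 ≤ i → i ≤ j → a j ≤ a i := by
  intro i j hi hij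
  induction j, hij using Nat.le_induction with
  | base => exact le_refl _
  | succ j hj ih => exact le_trans (hmono j (le_trans hi hj)) ih

private lemma tail_summable (a : ℕ → ℝ) (hsumm : Summable fun n => a (n + 1)) (N : ℕ)
    (hN : 1 ≤ N) : Summable fun i => a (N + i) := by
  have h := (summable_nat_add_iff (f := fun n => a (n + 1)) (N - 1)).2 hsumm
  have he : (fun i => a (N + i)) = fun i => a (i + (N - 1) + 1) := by
    funext i; congr 1; omega
  rw [he]; exact h

/-- sum of the gaps in block `M`, i.e. indices `2^M, …, 2^{M+1}-1`. -/
private noncomputable def blockSum (a : ℕ → ℝ) (M : ℕ) : ℝ :=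
  ∑ i ∈ Finset.range (2 ^ M), a (2 ^ M + i)

private lemma blockSum_nonneg (a : ℕ → ℝ) (hpos : ∀ n ≥ 1, 0 < a n) (M : ℕ) :
    0 ≤ blockSum a M :=
  Finset.sum_nonneg fun i _ => (hpos _ (by have := Nat.one_le_two_pow (n := M); omega)).le

private lemma block_partial (a : ℕ → ℝ) (N : ℕ) :
    ∀ K : ℕ, ∑ k ∈ Finset.range K, blockSum a (N + k)
      = ∑ i ∈ Finset.range (2 ^ (N + K) - 2 ^ N), a (2 ^ N + i) := by
  intro K
  induction K with
  | zero => simp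
  | succ K ih =>
    have h2 : 2 ^ N ≤ 2 ^ (N + K) := Nat.pow_le_pow_right (by norm_num) (by omega)
    have h3 : 2 ^ (N + (K + 1)) = 2 ^ (N + K) * 2 := by
      rw [show N + (K + 1) = (N + K) + 1 from rfl, pow_succ]
    have h1 : 2 ^ (N + (K + 1)) - 2 ^ N = (2 ^ (N + K) - 2 ^ N) + 2 ^ (N + K) := by omega
    rw [Finset.sum_range_succ, ih, h1, Finset.sum_range_add]
    congr 1
    apply Finset.sum_congr rfl
    intro i _
    congr 1
    omega

private lemma le_sub_pow (N : ℕ) : ∀ K : ℕ, K ≤ 2 ^ (N + K) - 2 ^ N := by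
  intro K
  induction K with
  | zero => simp
  | succ K ih =>
    have h1 : 2 ^ (N + (K + 1)) = 2 ^ (N + K) * 2 := by
      rw [show N + (K + 1) = (N + K) + 1 from rfl, pow_succ]
    have h2 : 2 ^ N ≤ 2 ^ (N + K) := Nat.pow_le_pow_right (by norm_num) (by omega)
    have h0 : (1:ℕ) ≤ 2 ^ N := Nat.one_le_two_pow
    rw [h1]
    omega

private lemma block_hasSum (a : ℕ → ℝ) (hpos : ∀ n ≥ 1, 0 < a n)
    (hsumm : Summable fun n => a (n + 1)) (N : ℕ) :
    Summable (fun k => blockSum a (N + k)) ∧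
      ∑' k, blockSum a (N + k) = xseq a (2 ^ N) := by
  have hg : Summable fun i => a (2 ^ N + i) :=
    tail_summable a hsumm _ Nat.one_le_two_pow
  have hnn : ∀ i : ℕ, 0 ≤ a (2 ^ N + i) := fun i =>
    (hpos _ (by have := Nat.one_le_two_pow (n := N); omega)).le
  have hgs : HasSum (fun i => a (2 ^ N + i)) (xseq a (2 ^ N)) := hg.hasSum
  have hbound : ∀ K : ℕ, ∑ k ∈ Finset.range K, blockSum a (N + k) ≤ xseq a (2 ^ N) := by
    intro K
    rw [block_partial a N K]
    exact Summable.sum_le_tsum (Finset.range _) (fun i _ => hnn i) hg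
  have hbs : Summable (fun k => blockSum a (N + k)) :=
    summable_of_sum_range_le (fun k => blockSum_nonneg a hpos _) hbound
  refine ⟨hbs, ?_⟩
  have hM : Filter.Tendsto (fun K => 2 ^ (N + K) - 2 ^ N) Filter.atTop Filter.atTop :=
    Filter.tendsto_atTop_mono (le_sub_pow N) Filter.tendsto_id
  have ht2 : Filter.Tendsto (fun K => ∑ i ∈ Finset.range (2 ^ (N + K) - 2 ^ N),
      a (2 ^ N + i)) Filter.atTop (nhds (xseq a (2 ^ N))) :=
    (hgs.tendsto_sum_nat).comp hM
  have ht2' : Filter.Tendsto (fun K => ∑ k ∈ Finset.range K, blockSum a (N + k))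
      Filter.atTop (nhds (xseq a (2 ^ N))) :=
    ht2.congr fun K => (block_partial a N K).symm
  exact tendsto_nhds_unique hbs.hasSum.tendsto_sum_nat ht2'

private lemma strict_drop (a : ℕ → ℝ) (hpos : ∀ n ≥ 1, 0 < a n)
    (hmono : ∀ n ≥ 1, a (n + 1) ≤ a n) (hsumm : Summable fun n => a (n + 1))
    (N : ℕ) (h : ∀ k, a (2 ^ N) ≤ a (2 ^ (N + k))) : False := by
  have h0 : Filter.Tendsto (fun i => a (i + 1)) Filter.atTop (nhds 0) :=
    hsumm.tendsto_atTop_zero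
  have hposN : 0 < a (2 ^ N) := hpos _ Nat.one_le_two_pow
  obtain ⟨M, hM⟩ := (h0.eventually (gt_mem_nhds hposN)).exists
  have hMle : M + 1 ≤ 2 ^ (N + M) := by
    have h1 := Nat.lt_two_pow_self (n := M)
    have h2 : 2 ^ M ≤ 2 ^ (N + M) := Nat.pow_le_pow_right (by norm_num) (by omega)
    omega
  have := amono a hmono (M + 1) (2 ^ (N + M)) (by omega) hMle
  have := h M
  linarith

end Aux

private lemma key_bounds (a : ℕ → ℝ) (hpos : ∀ n ≥ 1, 0 < a n)
    (hmono : ∀ n ≥ 1, a (n + 1) ≤ a n) (hsumm : Summable fun n => a (n + 1))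
    (n m : ℕ) (hn : 1 ≤ n) (hm1 : 2 ^ n ≤ m) (hm2 : m < 2 ^ (n + 1)) :
    sseq a (n + 1) < clen a m ∧ clen a m < sseq a (n - 1) := by
  have am := amono a hmono
  set term : ℕ → ℝ := fun k => ∑ i ∈ Finset.range (2 ^ k), a (2 ^ k * m + i) with hterm
  have hclen : clen a m = ∑' k, term k := rfl
  -- index bounds
  have hidx_lo : ∀ k i : ℕ, i < 2 ^ k → 2 ^ (n + k) ≤ 2 ^ k * m + i := by
    intro k i _
    have h1 : 2 ^ k * 2 ^ n ≤ 2 ^ k * m := Nat.mul_le_mul_left _ hm1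
    have h2 : 2 ^ k * 2 ^ n = 2 ^ (n + k) := by rw [← pow_add]; congr 1; omega
    calc 2 ^ (n + k) = 2 ^ k * 2 ^ n := h2.symm
      _ ≤ 2 ^ k * m := h1
      _ ≤ 2 ^ k * m + i := Nat.le_add_right _ _
  have hidx_hi : ∀ k i : ℕ, i < 2 ^ k → 2 ^ k * m + i ≤ 2 ^ (n + k + 1) - 1 := by
    intro k i hi
    have h1 : 2 ^ k * m ≤ 2 ^ k * (2 ^ (n + 1) - 1) := Nat.mul_le_mul_left _ (by omega)
    have h2 : 2 ^ k * (2 ^ (n + 1) - 1) = 2 ^ k * 2 ^ (n + 1) - 2 ^ k := by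
      rw [Nat.mul_sub, Nat.mul_one]
    have h3 : 2 ^ k * 2 ^ (n + 1) = 2 ^ (n + k + 1) := by rw [← pow_add]; congr 1; omega
    have h4 : (1 : ℕ) ≤ 2 ^ k := Nat.one_le_two_pow
    have h5 : 2 ^ k ≤ 2 ^ (n + k + 1) := Nat.pow_le_pow_right (by norm_num) (by omega)
    calc 2 ^ k * m + i ≤ 2 ^ k * (2 ^ (n + 1) - 1) + i := Nat.add_le_add_right h1 _
      _ = (2 ^ k * 2 ^ (n + 1) - 2 ^ k) + i := by rw [h2]
      _ = (2 ^ (n + k + 1) - 2 ^ k) + i := by rw [h3]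
      _ ≤ 2 ^ (n + k + 1) - 1 := by omega
  have hposidx : ∀ k i : ℕ, i < 2 ^ k → 1 ≤ 2 ^ k * m + i := by
    intro k i hi
    have := hidx_lo k i hi
    have : (1 : ℕ) ≤ 2 ^ (n + k) := Nat.one_le_two_pow
    omega
  have hterm_nonneg : ∀ k, 0 ≤ term k := by
    intro k
    exact Finset.sum_nonneg fun i hi =>
      (hpos _ (hposidx k i (Finset.mem_range.1 hi))).le
  -- cast helper
  have hcast : ∀ M : ℕ, ((2 ^ M : ℕ) : ℝ) = (2 : ℝ) ^ M := by intro M; push_cast; ring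
  -- term upper bound: term k ≤ 2^k * a (2^(n+k))
  have hterm_ub : ∀ k, term k ≤ (2 : ℝ) ^ k * a (2 ^ (n + k)) := by
    intro k
    calc term k ≤ ∑ _i ∈ Finset.range (2 ^ k), a (2 ^ (n + k)) :=
          Finset.sum_le_sum fun i hi =>
            am _ _ Nat.one_le_two_pow (hidx_lo k i (Finset.mem_range.1 hi))
      _ = (2 : ℝ) ^ k * a (2 ^ (n + k)) := by
          rw [Finset.sum_const, Finset.card_range, nsmul_eq_mul, hcast]
  -- term lower bound: 2^k * a (2^(n+k+1)-1) ≤ term k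
  have hterm_lb : ∀ k, (2 : ℝ) ^ k * a (2 ^ (n + k + 1) - 1) ≤ term k := by
    intro k
    calc (2 : ℝ) ^ k * a (2 ^ (n + k + 1) - 1)
        = ∑ _i ∈ Finset.range (2 ^ k), a (2 ^ (n + k + 1) - 1) := by
          rw [Finset.sum_const, Finset.card_range, nsmul_eq_mul, hcast]
      _ ≤ term k := Finset.sum_le_sum fun i hi =>
          am _ _ (hposidx k i (Finset.mem_range.1 hi)) (hidx_hi k i (Finset.mem_range.1 hi))
  -- blockSum bounds
  have hblock_ub : ∀ M, blockSum a M ≤ (2 : ℝ) ^ M * a (2 ^ M) := by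
    intro M
    calc blockSum a M ≤ ∑ _i ∈ Finset.range (2 ^ M), a (2 ^ M) :=
          Finset.sum_le_sum fun i hi => am _ _ Nat.one_le_two_pow (Nat.le_add_right _ _)
      _ = (2 : ℝ) ^ M * a (2 ^ M) := by
          rw [Finset.sum_const, Finset.card_range, nsmul_eq_mul, hcast]
  have hblock_lb : ∀ M, (2 : ℝ) ^ M * a (2 ^ (M + 1)) ≤ blockSum a M := by
    intro M
    calc (2 : ℝ) ^ M * a (2 ^ (M + 1))
        = ∑ _i ∈ Finset.range (2 ^ M), a (2 ^ (M + 1)) := by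
          rw [Finset.sum_const, Finset.card_range, nsmul_eq_mul, hcast]
      _ ≤ blockSum a M := Finset.sum_le_sum fun i hi => by
          refine am _ _ ?_ ?_
          · have : (1:ℕ) ≤ 2 ^ M := Nat.one_le_two_pow; omega
          · have h1 : i < 2 ^ M := Finset.mem_range.1 hi
            have h2 : 2 ^ (M + 1) = 2 ^ M * 2 := pow_succ 2 M
            omega
  obtain ⟨hBsumm₁, hBval₁⟩ := block_hasSum a hpos hsumm (n - 1)
  obtain ⟨hBsumm₂, hBval₂⟩ := block_hasSum a hpos hsumm (n + 1)
  ---- UPPER BOUND : clen a m < sseq a (n-1) ----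
  have hle_up : ∀ k, (2 : ℝ) ^ (n - 1) * term k ≤ blockSum a (n - 1 + k) := by
    intro k
    have h1 : (2 : ℝ) ^ (n - 1) * term k ≤ (2 : ℝ) ^ (n - 1 + k) * a (2 ^ (n + k)) := by
      have := hterm_ub k
      have hp : (0:ℝ) ≤ (2 : ℝ) ^ (n - 1) := by positivity
      calc (2 : ℝ) ^ (n - 1) * term k ≤ (2 : ℝ) ^ (n - 1) * ((2 : ℝ) ^ k * a (2 ^ (n + k))) :=
            mul_le_mul_of_nonneg_left this hp
        _ = (2 : ℝ) ^ (n - 1 + k) * a (2 ^ (n + k)) := by rw [pow_add]; ring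
    have h2 : (2 : ℝ) ^ (n - 1 + k) * a (2 ^ (n + k)) ≤ blockSum a (n - 1 + k) := by
      have := hblock_lb (n - 1 + k)
      have he : n - 1 + k + 1 = n + k := by omega
      rwa [he] at this
    linarith
  have hsum_term : Summable term := by
    have h1 : Summable (fun k => (2 : ℝ) ^ (n - 1) * term k) :=
      Summable.of_nonneg_of_le (fun k => mul_nonneg (by positivity) (hterm_nonneg k)) hle_up hBsumm₁
    have h2 : ((2 : ℝ) ^ (n - 1)) ≠ 0 := by positivity
    exact (summable_mul_left_iff h2).mp h1
  have hup : clen a m < sseq a (n - 1) := by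
    -- strictness index
    obtain ⟨k₀, hk₀⟩ : ∃ k, a (2 ^ (n + k)) < a (2 ^ (n - 1 + k)) := by
      by_contra hcon
      push_neg at hcon
      refine strict_drop a hpos hmono hsumm (n - 1) ?_
      intro k
      induction k with
      | zero => simp
      | succ k ih =>
        have h2 : a (2 ^ (n - 1 + k)) ≤ a (2 ^ (n + k)) := hcon k
        have he : n + k = n - 1 + (k + 1) := by omega
        rw [he] at h2
        exact le_trans ih h2
    have hstr : (2 : ℝ) ^ (n - 1) * term k₀ < blockSum a (n - 1 + k₀) := by
      have h1 : (2 : ℝ) ^ (n - 1) * term k₀ ≤ (2 : ℝ) ^ (n - 1 + k₀) * a (2 ^ (n + k₀)) := by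
        have := hterm_ub k₀
        have hp : (0:ℝ) ≤ (2 : ℝ) ^ (n - 1) := by positivity
        calc (2 : ℝ) ^ (n - 1) * term k₀
            ≤ (2 : ℝ) ^ (n - 1) * ((2 : ℝ) ^ k₀ * a (2 ^ (n + k₀))) :=
              mul_le_mul_of_nonneg_left this hp
          _ = (2 : ℝ) ^ (n - 1 + k₀) * a (2 ^ (n + k₀)) := by rw [pow_add]; ring
      have h2 : (2 : ℝ) ^ (n - 1 + k₀) * a (2 ^ (n + k₀)) < blockSum a (n - 1 + k₀) := by
        have hlt : ∑ _i ∈ Finset.range (2 ^ (n - 1 + k₀)), a (2 ^ (n + k₀))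
            < blockSum a (n - 1 + k₀) := by
          refine Finset.sum_lt_sum (fun i hi => ?_) ⟨0, Finset.mem_range.2 (by have := Nat.one_le_two_pow (n := n - 1 + k₀); omega), ?_⟩
          · refine am _ _ (le_trans Nat.one_le_two_pow (Nat.le_add_right _ _)) ?_
            have h3 : i < 2 ^ (n - 1 + k₀) := Finset.mem_range.1 hi
            have h4 : 2 ^ (n + k₀) = 2 ^ (n - 1 + k₀) * 2 := by
              rw [← pow_succ]; congr 1; omega
            omega
          · simpa using hk₀
        calc (2 : ℝ) ^ (n - 1 + k₀) * a (2 ^ (n + k₀))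
            = ∑ _i ∈ Finset.range (2 ^ (n - 1 + k₀)), a (2 ^ (n + k₀)) := by
              rw [Finset.sum_const, Finset.card_range, nsmul_eq_mul, hcast]
          _ < blockSum a (n - 1 + k₀) := hlt
      linarith
    have htsum : ∑' k, (2 : ℝ) ^ (n - 1) * term k < ∑' k, blockSum a (n - 1 + k) :=
      Summable.tsum_lt_tsum_of_nonneg (fun k => mul_nonneg (by positivity) (hterm_nonneg k)) hle_up hstr hBsumm₁
    rw [tsum_mul_left, hBval₁, ← hclen] at htsum
    have hpow : (0:ℝ) < (2 : ℝ) ^ (n - 1) := by positivity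
    have : clen a m < xseq a (2 ^ (n - 1)) / (2 : ℝ) ^ (n - 1) := by
      rw [lt_div_iff₀ hpow]; linarith [htsum]
    simpa [sseq] using this
  ---- LOWER BOUND : sseq a (n+1) < clen a m ----
  have hle_lo : ∀ k, blockSum a (n + 1 + k) ≤ (2 : ℝ) ^ (n + 1) * term k := by
    intro k
    have h1 : blockSum a (n + 1 + k) ≤ (2 : ℝ) ^ (n + 1 + k) * a (2 ^ (n + 1 + k)) :=
      hblock_ub _
    have h2 : a (2 ^ (n + 1 + k)) ≤ a (2 ^ (n + k + 1) - 1) := by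
      refine am _ _ ?_ ?_
      · have h3 : (2:ℕ) ≤ 2 ^ (n + k + 1) := by
          calc (2:ℕ) = 2 ^ 1 := rfl
          _ ≤ 2 ^ (n + k + 1) := Nat.pow_le_pow_right (by norm_num) (by omega)
        omega
      · have he : n + 1 + k = n + k + 1 := by omega
        rw [he]; exact Nat.sub_le _ _
    have h3 : (2 : ℝ) ^ (n + 1 + k) * a (2 ^ (n + k + 1) - 1) ≤ (2 : ℝ) ^ (n + 1) * term k := by
      have := hterm_lb k
      have hp : (0:ℝ) ≤ (2 : ℝ) ^ (n + 1) := by positivity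
      calc (2 : ℝ) ^ (n + 1 + k) * a (2 ^ (n + k + 1) - 1)
          = (2 : ℝ) ^ (n + 1) * ((2 : ℝ) ^ k * a (2 ^ (n + k + 1) - 1)) := by
            rw [pow_add]; ring
        _ ≤ (2 : ℝ) ^ (n + 1) * term k := mul_le_mul_of_nonneg_left this hp
    have h4 : (2 : ℝ) ^ (n + 1 + k) * a (2 ^ (n + 1 + k))
        ≤ (2 : ℝ) ^ (n + 1 + k) * a (2 ^ (n + k + 1) - 1) :=
      mul_le_mul_of_nonneg_left h2 (by positivity)
    linarith
  have hlo : sseq a (n + 1) < clen a m := by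
    obtain ⟨k₀, hk₀⟩ : ∃ k, a (2 ^ (n + k + 1)) < a (2 ^ (n + k + 1) - 1)
        ∨ a (2 ^ (n + k + 2) - 1) < a (2 ^ (n + 1 + k)) := by
      by_contra hcon
      push_neg at hcon
      refine strict_drop a hpos hmono hsumm (n + 1) ?_
      intro k
      induction k with
      | zero => simp
      | succ k ih =>
        have h1 := (hcon k).2
        have h2 := (hcon (k + 1)).1
        have he2 : n + (k + 1) + 1 = n + k + 2 := by omega
        have he3 : n + 1 + (k + 1) = n + k + 2 := by omega
        rw [he2] at h2
        rw [he3]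
        exact le_trans ih (le_trans h1 h2)
    have hstr : blockSum a (n + 1 + k₀) < (2 : ℝ) ^ (n + 1) * term k₀ := by
      have hch : (2 : ℝ) ^ (n + 1 + k₀) * a (2 ^ (n + k₀ + 1) - 1)
          ≤ (2 : ℝ) ^ (n + 1) * term k₀ := by
        have := hterm_lb k₀
        have hp : (0:ℝ) ≤ (2 : ℝ) ^ (n + 1) := by positivity
        calc (2 : ℝ) ^ (n + 1 + k₀) * a (2 ^ (n + k₀ + 1) - 1)
            = (2 : ℝ) ^ (n + 1) * ((2 : ℝ) ^ k₀ * a (2 ^ (n + k₀ + 1) - 1)) := by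
              rw [pow_add]; ring
          _ ≤ (2 : ℝ) ^ (n + 1) * term k₀ := mul_le_mul_of_nonneg_left this hp
      rcases hk₀ with hA | hB
      · have h1 : blockSum a (n + 1 + k₀) ≤ (2 : ℝ) ^ (n + 1 + k₀) * a (2 ^ (n + 1 + k₀)) :=
          hblock_ub _
        have he : n + 1 + k₀ = n + k₀ + 1 := by omega
        have h2 : (2 : ℝ) ^ (n + 1 + k₀) * a (2 ^ (n + 1 + k₀))
            < (2 : ℝ) ^ (n + 1 + k₀) * a (2 ^ (n + k₀ + 1) - 1) := by
          rw [he]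
          exact mul_lt_mul_of_pos_left hA (by positivity)
        linarith
      · have h1 : blockSum a (n + 1 + k₀) < (2 : ℝ) ^ (n + 1 + k₀) * a (2 ^ (n + 1 + k₀)) := by
          have hlt : blockSum a (n + 1 + k₀)
              < ∑ _i ∈ Finset.range (2 ^ (n + 1 + k₀)), a (2 ^ (n + 1 + k₀)) := by
            refine Finset.sum_lt_sum (fun i hi => ?_)
              ⟨2 ^ (n + 1 + k₀) - 1, Finset.mem_range.2 (by
                have : (1:ℕ) ≤ 2 ^ (n + 1 + k₀) := Nat.one_le_two_pow; omega), ?_⟩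
            · exact am _ _ Nat.one_le_two_pow (Nat.le_add_right _ _)
            · have he : 2 ^ (n + 1 + k₀) + (2 ^ (n + 1 + k₀) - 1) = 2 ^ (n + k₀ + 2) - 1 := by
                have h4 : 2 ^ (n + k₀ + 2) = 2 ^ (n + 1 + k₀) * 2 := by
                  rw [← pow_succ]; congr 1; omega
                have : (1:ℕ) ≤ 2 ^ (n + 1 + k₀) := Nat.one_le_two_pow
                omega
              rw [he]
              exact hB
          calc blockSum a (n + 1 + k₀)
              < ∑ _i ∈ Finset.range (2 ^ (n + 1 + k₀)), a (2 ^ (n + 1 + k₀)) := hlt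
            _ = (2 : ℝ) ^ (n + 1 + k₀) * a (2 ^ (n + 1 + k₀)) := by
                rw [Finset.sum_const, Finset.card_range, nsmul_eq_mul, hcast]
        have h2 : a (2 ^ (n + 1 + k₀)) ≤ a (2 ^ (n + k₀ + 1) - 1) := by
          refine am _ _ ?_ ?_
          · have h3 : (2:ℕ) ≤ 2 ^ (n + k₀ + 1) := by
              calc (2:ℕ) = 2 ^ 1 := rfl
              _ ≤ 2 ^ (n + k₀ + 1) := Nat.pow_le_pow_right (by norm_num) (by omega)
            omega
          · have he : n + 1 + k₀ = n + k₀ + 1 := by omega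
            rw [he]; exact Nat.sub_le _ _
        have h3 : (2 : ℝ) ^ (n + 1 + k₀) * a (2 ^ (n + 1 + k₀))
            ≤ (2 : ℝ) ^ (n + 1 + k₀) * a (2 ^ (n + k₀ + 1) - 1) :=
          mul_le_mul_of_nonneg_left h2 (by positivity)
        linarith
    have hsum_g : Summable (fun k => (2 : ℝ) ^ (n + 1) * term k) :=
      hsum_term.mul_left _
    have htsum : ∑' k, blockSum a (n + 1 + k) < ∑' k, (2 : ℝ) ^ (n + 1) * term k :=
      Summable.tsum_lt_tsum_of_nonneg (fun k => blockSum_nonneg a hpos _) hle_lo hstr hsum_g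
    rw [tsum_mul_left, hBval₂, ← hclen] at htsum
    have hpow : (0:ℝ) < (2 : ℝ) ^ (n + 1) := by positivity
    have : xseq a (2 ^ (n + 1)) / (2 : ℝ) ^ (n + 1) < clen a m := by
      rw [div_lt_iff₀ hpow]; linarith [htsum]
    simpa [sseq] using this
  exact ⟨hlo, hup⟩

/-- Every closed interval `I_{n,j}` of step `n` in the construction of the decreasing
Cantor set satisfies `s_{n+1} < |I_{n,j}| < s_{n-1}`. -/
theorem step_interval_length_bounds (a : ℕ → ℝ) (hpos : ∀ n ≥ 1, 0 < a n) (hmono : ∀ n ≥ 1, a (n + 1) ≤ a n)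
    (hsumm : Summable fun n => a (n + 1)) (htot : ∑' n : ℕ, a (n + 1) = 1) :
    ∀ n ≥ 1, ∀ j, 1 ≤ j → j ≤ 2 ^ n →
      sseq a (n + 1) < clen a (2 ^ n + j - 1) ∧ clen a (2 ^ n + j - 1) < sseq a (n - 1) := by
  intro n hn j hj1 hj2
  have h2n : (1:ℕ) ≤ 2 ^ n := Nat.one_le_two_pow
  have hps : 2 ^ (n + 1) = 2 ^ n * 2 := pow_succ 2 n
  exact key_bounds a hpos hmono hsumm n (2 ^ n + j - 1) hn (by omega) (by omega)
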